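/- arXiv:2411.00558 — 7 statements merged into one kernel-verified Lean document; each statement's English description precedes it below -/
import Mathlib

section
/- (No conflicting justifications at the same checkpoint slot; first claim in the proof of Lemma 'accountable justification'.) Let V be a set of FFG-votes among n validators. If checkpoints 𝒞 = (χ, k) and 𝒞′ = (χ′, k) with the same checkpoint slot k are both justified w.r.t. V and the chains χ and χ′ conflict, then the set of validators that violate E1 w.r.t. V has cardinality m with 3·m ≥ n (i.e., at least n/3 validators are detectably slashable for double voting). -/
structure Block (β : Type) where
  body : β
  p : ℤ

def genesisBlock {β : Type} (g : β) : Block β := ⟨g, -1⟩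

structure Chain (β : Type) (g : β) where
  blocks : List (Block β)
  ne : blocks ≠ []
  head_genesis : blocks.head? = some (genesisBlock g)
  strict : List.Chain' (fun a b => a.p < b.p) blocks

namespace Chain

variable {β : Type} {g : β}

/-- The height of a chain: the slot of its last block. -/
def height (χ : Chain β g) : ℤ := (χ.blocks.getLast χ.ne).p

/-- `χ₁ ⪯ χ₂`: `χ₁` is a prefix of `χ₂`. -/
def IsPrefix (χ₁ χ₂ : Chain β g) : Prop := χ₁.blocks <+: χ₂.blocks

/-- Two chains conflict if neither is a prefix of the other. -/
def Conflicts (χ₁ χ₂ : Chain β g) : Prop := ¬ χ₁.IsPrefix χ₂ ∧ ¬ χ₂.IsPrefix χ₁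

end Chain

def genesisChain {β : Type} (g : β) : Chain β g where
  blocks := [genesisBlock g]
  ne := by simp
  head_genesis := rfl
  strict := List.isChain_singleton _

structure Checkpoint (β : Type) (g : β) where
  chain : Chain β g
  c : ℕ
  height_le : chain.height ≤ (c : ℤ)

def genesisCheckpoint {β : Type} (g : β) : Checkpoint β g where
  chain := genesisChain g
  c := 0
  height_le := by simp [Chain.height, genesisChain, genesisBlock]

namespace Checkpoint

variable {β : Type} {g : β}

/-- Lexicographic order on checkpoints: `𝒞 ≤ 𝒞′`. -/
def le (C C' : Checkpoint β g) : Prop :=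
  C.c < C'.c ∨ (C.c = C'.c ∧ C.chain.height ≤ C'.chain.height)

/-- Strict lexicographic order on checkpoints: `𝒞 < 𝒞′`. -/
def lt (C C' : Checkpoint β g) : Prop :=
  C.c < C'.c ∨ (C.c = C'.c ∧ C.chain.height < C'.chain.height)

end Checkpoint

structure FFGVote (n : ℕ) (β : Type) (g : β) where
  source : Checkpoint β g
  target : Checkpoint β g
  sender : Fin n

def FFGVote.Valid {n : ℕ} {β : Type} {g : β} (m : FFGVote n β g) : Prop :=
  m.source.chain.IsPrefix m.target.chain ∧ m.source.c < m.target.c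

/-- The set of senders of a set of votes. -/
def senders {n : ℕ} {β : Type} {g : β} (M : Set (FFGVote n β g)) : Set (Fin n) :=
  {v | ∃ m ∈ M, m.sender = v}

/-- A checkpoint is justified w.r.t. a set of votes `V`. -/
inductive Justified {n : ℕ} {β : Type} {g : β} (V : Set (FFGVote n β g)) :
    Checkpoint β g → Prop
  | genesis : Justified V (genesisCheckpoint g)
  | step (C : Checkpoint β g) (M : Set (FFGVote n β g))
      (hMV : M ⊆ V)
      (hcard : 2 * n ≤ 3 * (senders M).ncard)
      (hjust : ∀ m ∈ M, Justified V m.source)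
      (hvotes : ∀ m ∈ M, m.Valid ∧
        m.source.chain.IsPrefix C.chain ∧ C.chain.IsPrefix m.target.chain ∧
        m.target.c = C.c) :
      Justified V C

/-- A checkpoint is finalized w.r.t. a set of votes `V`. -/
def Finalized {n : ℕ} {β : Type} {g : β} (V : Set (FFGVote n β g))
    (C : Checkpoint β g) : Prop :=
  C = genesisCheckpoint g ∨
    (Justified V C ∧ ∃ M ⊆ V, 2 * n ≤ 3 * (senders M).ncard ∧
      ∀ m ∈ M, m.Valid ∧ m.source = C ∧ m.target.c = C.c + 1)

/-- E1 (double voting). -/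
def ViolatesE1 {n : ℕ} {β : Type} {g : β} (V : Set (FFGVote n β g)) (v : Fin n) : Prop :=
  ∃ m₁ ∈ V, ∃ m₂ ∈ V, m₁.sender = v ∧ m₂.sender = v ∧ m₁ ≠ m₂ ∧
    m₁.target.c = m₂.target.c

/-- E2 (surround voting). -/
def ViolatesE2 {n : ℕ} {β : Type} {g : β} (V : Set (FFGVote n β g)) (v : Fin n) : Prop :=
  ∃ m₁ ∈ V, ∃ m₂ ∈ V, m₁.sender = v ∧ m₂.sender = v ∧
    m₂.source.lt m₁.source ∧ m₁.target.c < m₂.target.c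

structure Ack (n : ℕ) (β : Type) (g : β) where
  cp : Checkpoint β g
  sender : Fin n

/-- E3 (ack surround). -/
def ViolatesE3 {n : ℕ} {β : Type} {g : β} (V : Set (FFGVote n β g))
    (A : Set (Ack n β g)) (v : Fin n) : Prop :=
  ∃ m ∈ V, ∃ a ∈ A, m.sender = v ∧ a.sender = v ∧
    m.source.lt a.cp ∧ a.cp.c < m.target.c

/-- Finalized with acknowledgments. -/
def FinalizedWithAcks {n : ℕ} {β : Type} {g : β} (V : Set (FFGVote n β g))
    (A : Set (Ack n β g)) (C : Checkpoint β g) : Prop :=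
  Finalized V C ∨
    (Justified V C ∧ 2 * n ≤ 3 * (Set.ncard {v : Fin n | (⟨C, v⟩ : Ack n β g) ∈ A}))


lemma genesis_chain_prefix {β : Type} {g : β} (χ : Chain β g) :
    (genesisChain g).IsPrefix χ := by
  unfold Chain.IsPrefix genesisChain
  obtain ⟨a, t, h⟩ : ∃ a t, χ.blocks = a :: t := by
    cases hb : χ.blocks with
    | nil => exact absurd hb χ.ne
    | cons a t => exact ⟨a, t, rfl⟩
  have hg := χ.head_genesis
  rw [h] at hg
  simp only [List.head?_cons, Option.some.injEq] at hg
  subst hg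
  rw [h]
  exact ⟨t, rfl⟩

/-- No conflicting justifications at the same checkpoint slot. -/
theorem no_conflicting_justifications_same_slot
    {n : ℕ} {β : Type} {g : β} (V : Set (FFGVote n β g))
    (C C' : Checkpoint β g) (hslot : C.c = C'.c)
    (hC : Justified V C) (hC' : Justified V C')
    (hconf : C.chain.Conflicts C'.chain) :
    n ≤ 3 * Set.ncard {v : Fin n | ViolatesE1 V v} := by
  cases hC with
  | genesis =>
    exact absurd (genesis_chain_prefix C'.chain) hconf.1
  | step _ M hMV hcard hjust hvotes =>
    cases hC' with
    | genesis =>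
      exact absurd (genesis_chain_prefix C.chain) hconf.2
    | step _ M' hMV' hcard' hjust' hvotes' =>
      set S := senders M with hS
      set S' := senders M' with hS'
      have hsub : S ∩ S' ⊆ {v : Fin n | ViolatesE1 V v} := by
        rintro v ⟨⟨m, hm, hmv⟩, ⟨m', hm', hm'v⟩⟩
        have h1 := hvotes m hm
        have h2 := hvotes' m' hm'
        have hne : m ≠ m' := by
          rintro rfl
          rcases List.prefix_or_prefix_of_prefix h1.2.2.1 h2.2.2.1 with h | h
          · exact hconf.1 h
          · exact hconf.2 h
        exact ⟨m, hMV hm, m', hMV' hm', hmv, hm'v, hne, by rw [h1.2.2.2, h2.2.2.2, hslot]⟩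
      have hfin : (S : Set (Fin n)).Finite := Set.toFinite _
      have hfin' : (S' : Set (Fin n)).Finite := Set.toFinite _
      have hkey := Set.ncard_inter_add_ncard_union S S' hfin hfin'
      have hU : (S ∪ S').ncard ≤ n := by
        have := Set.ncard_le_ncard (Set.subset_univ (S ∪ S')) (Set.toFinite _)
        simpa [Set.ncard_univ] using this
      have hmono : (S ∩ S').ncard ≤ Set.ncard {v : Fin n | ViolatesE1 V v} :=
        Set.ncard_le_ncard hsub (Set.toFinite _)
      omega
end

section
/- (Lemma 'accountable safety'.) Let V₁ and V₂ be sets of FFG-votes among n validators, let 𝒞₁ be a checkpoint finalized w.r.t. V₁ and 𝒞₂ a checkpoint finalized w.r.t. V₂, and suppose chains χ₁ ⪯ 𝒞₁.chain and χ₂ ⪯ 𝒞₂.chain conflict. Then the set of validators that violate E1 or E2 w.r.t. V₁ ∪ V₂ has cardinality m with 3·m ≥ n (i.e., if two conflicting chains are finalized according to any two views, at least n/3 validators can be detected to have violated either E1 or E2). -/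
section AuxAS

variable {n : ℕ} {β : Type} {g : β}

lemma genesis_prefix_aux (χ : Chain β g) : (genesisChain g).IsPrefix χ := by
  unfold Chain.IsPrefix genesisChain
  rcases χ with ⟨bs, ne, hh, _⟩
  cases bs with
  | nil => simp at ne
  | cons a t =>
    simp only [List.head?_cons, Option.some.injEq] at hh
    subst hh
    exact ⟨t, rfl⟩

lemma height_lt_of_strict_prefix_aux (χ₁ χ₂ : Chain β g) (h : χ₁.IsPrefix χ₂)
    (hne : ¬ χ₂.IsPrefix χ₁) : χ₁.height < χ₂.height := by
  obtain ⟨t, ht⟩ := h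
  have htne : t ≠ [] := by
    rintro rfl
    exact hne ⟨[], by simpa using ht.symm⟩
  haveI : IsTrans (Block β) (fun a b => a.p < b.p) := ⟨fun a b c => lt_trans⟩
  have hpw : List.Pairwise (fun (a b : Block β) => a.p < b.p) χ₂.blocks :=
    List.isChain_iff_pairwise.mp χ₂.strict
  rw [← ht] at hpw
  have hkey := (List.pairwise_append.mp hpw).2.2
  have h1 : χ₁.blocks.getLast χ₁.ne ∈ χ₁.blocks := List.getLast_mem _
  have h2 : t.getLast htne ∈ t := List.getLast_mem _
  have hlast : χ₂.blocks.getLast χ₂.ne = t.getLast htne := by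
    have : (χ₁.blocks ++ t).getLast (by simp [htne]) = t.getLast htne := by
      rw [List.getLast_append]
      simp [htne]
    rw [← this]
    congr 1
    exact ht.symm
  unfold Chain.height
  rw [hlast]
  exact hkey _ h1 _ h2

lemma inter_card_aux (s t u : Set (Fin n)) (hs : 2 * n ≤ 3 * s.ncard)
    (ht : 2 * n ≤ 3 * t.ncard) (h : s ∩ t ⊆ u) : n ≤ 3 * u.ncard := by
  have h1 : (s ∩ t).ncard + (s ∪ t).ncard = s.ncard + t.ncard :=
    Set.ncard_inter_add_ncard_union s t (Set.toFinite s) (Set.toFinite t)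
  have h2 : (s ∪ t).ncard ≤ n := by
    have h3 := Set.ncard_le_ncard (Set.subset_univ (s ∪ t)) Set.finite_univ
    simpa [Set.ncard_univ] using h3
  have h3 : (s ∩ t).ncard ≤ u.ncard := Set.ncard_le_ncard h (Set.toFinite u)
  omega

lemma checkpoint_lt_irrefl (C : Checkpoint β g) : ¬ C.lt C := by
  rintro (h | ⟨_, h⟩) <;> exact lt_irrefl _ h

lemma main_ind (V₁ V₂ : Set (FFGVote n β g)) (C₁ : Checkpoint β g)
    (J₁ M₁ : Set (FFGVote n β g))
    (hJ₁V : J₁ ⊆ V₁)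
    (hJ₁card : 2 * n ≤ 3 * (senders J₁).ncard)
    (hJ₁ : ∀ m ∈ J₁, m.target.c = C₁.c ∧ C₁.chain.IsPrefix m.target.chain)
    (hM₁V : M₁ ⊆ V₁)
    (hM₁card : 2 * n ≤ 3 * (senders M₁).ncard)
    (hM₁ : ∀ m ∈ M₁, m.source = C₁ ∧ m.target.c = C₁.c + 1)
    (c : ℕ) :
    ∀ X : Checkpoint β g, Justified V₂ X → X.c = c →
      ¬ C₁.chain.IsPrefix X.chain →
      (C₁.c < X.c ∨ (C₁.c = X.c ∧ ¬ X.chain.IsPrefix C₁.chain)) →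
      n ≤ 3 * Set.ncard {v : Fin n |
        ViolatesE1 (V₁ ∪ V₂) v ∨ ViolatesE2 (V₁ ∪ V₂) v} := by
  induction c using Nat.strong_induction_on with
  | _ c ih =>
    intro X hX hXc hnpre hQ
    cases hX with
    | genesis =>
      exfalso
      rcases hQ with h | ⟨h, hconf⟩
      · simp [genesisCheckpoint] at h
      · exact hconf (genesis_prefix_aux _)
    | step X M₂ hM₂V hM₂card hjust hvotes =>
      rcases hQ with hlt | ⟨heq, hconf⟩
      · -- C₁.c < X.c
        by_cases hrec : ∃ m ∈ M₂, C₁.c < m.source.c ∨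
            (C₁.c = m.source.c ∧ ¬ m.source.chain.IsPrefix C₁.chain)
        · obtain ⟨m, hm, hq⟩ := hrec
          obtain ⟨hvalid, hspre, hXpre, htc⟩ := hvotes m hm
          have hsc : m.source.c < c := by
            have := hvalid.2
            omega
          exact ih m.source.c (by omega) m.source (hjust m hm) rfl
            (fun h => hnpre (h.trans hspre))
            hq
        · push_neg at hrec
          have hltC : ∀ m ∈ M₂, m.source.lt C₁ := by
            intro m hm
            obtain ⟨h1, h2⟩ := hrec m hm
            rcases lt_or_eq_of_le h1 with h | h
            · exact Or.inl h
            · refine Or.inr ⟨h, ?_⟩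
              have hpre : m.source.chain.IsPrefix C₁.chain := h2 h.symm
              have hnp : ¬ C₁.chain.IsPrefix m.source.chain := by
                intro hp
                exact hnpre (hp.trans (hvotes m hm).2.1)
              exact height_lt_of_strict_prefix_aux _ _ hpre hnp
          refine inter_card_aux (senders M₁) (senders M₂) _ hM₁card hM₂card ?_
          rintro v ⟨⟨m₁, hm₁, hs₁⟩, ⟨m₂, hm₂, hs₂⟩⟩
          simp only [Set.mem_setOf_eq]
          by_cases hc1 : c = C₁.c + 1
          · left
            refine ⟨m₁, Set.mem_union_left _ (hM₁V hm₁),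
              m₂, Set.mem_union_right _ (hM₂V hm₂), hs₁, hs₂, ?_, ?_⟩
            · intro h
              have hlt' := hltC m₂ hm₂
              rw [← h, (hM₁ m₁ hm₁).1] at hlt'
              exact checkpoint_lt_irrefl _ hlt'
            · rw [(hM₁ m₁ hm₁).2, (hvotes m₂ hm₂).2.2.2, hXc, hc1]
          · right
            refine ⟨m₁, Set.mem_union_left _ (hM₁V hm₁),
              m₂, Set.mem_union_right _ (hM₂V hm₂), hs₁, hs₂, ?_, ?_⟩
            · rw [(hM₁ m₁ hm₁).1]
              exact hltC m₂ hm₂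
            · rw [(hM₁ m₁ hm₁).2, (hvotes m₂ hm₂).2.2.2, hXc]
              omega
      · -- C₁.c = X.c, conflict
        refine inter_card_aux (senders J₁) (senders M₂) _ hJ₁card hM₂card ?_
        rintro v ⟨⟨m₁, hm₁, hs₁⟩, ⟨m₂, hm₂, hs₂⟩⟩
        simp only [Set.mem_setOf_eq]
        left
        refine ⟨m₁, Set.mem_union_left _ (hJ₁V hm₁),
          m₂, Set.mem_union_right _ (hM₂V hm₂), hs₁, hs₂, ?_, ?_⟩
        · intro h
          have hp₁ := (hJ₁ m₁ hm₁).2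
          have hp₂ := (hvotes m₂ hm₂).2.2.1
          rw [h] at hp₁
          rcases List.prefix_or_prefix_of_prefix hp₁ hp₂ with h' | h'
          · exact hnpre h'
          · exact hconf h'
        · rw [(hJ₁ m₁ hm₁).1, (hvotes m₂ hm₂).2.2.2, heq]

lemma half_aux (V₁ V₂ : Set (FFGVote n β g)) (C₁ C₂ : Checkpoint β g)
    (hC₁ : Finalized V₁ C₁) (hC₂ : Finalized V₂ C₂)
    (hconf : C₁.chain.Conflicts C₂.chain) (hle : C₁.c ≤ C₂.c) :
    n ≤ 3 * Set.ncard {v : Fin n |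
      ViolatesE1 (V₁ ∪ V₂) v ∨ ViolatesE2 (V₁ ∪ V₂) v} := by
  have hC₁ne : C₁ ≠ genesisCheckpoint g := by
    rintro rfl
    exact hconf.1 (genesis_prefix_aux _)
  have hC₂ne : C₂ ≠ genesisCheckpoint g := by
    rintro rfl
    exact hconf.2 (genesis_prefix_aux _)
  rcases hC₁ with h | ⟨hJ, M₁, hM₁V, hM₁card, hM₁⟩
  · exact absurd h hC₁ne
  rcases hC₂ with h | ⟨hJ₂, _⟩
  · exact absurd h hC₂ne
  cases hJ with
  | genesis => exact absurd rfl hC₁ne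
  | step C₁ J₁ hJ₁V hJ₁card hJ₁just hJ₁votes =>
    refine main_ind V₁ V₂ C₁ J₁ M₁ hJ₁V hJ₁card
      (fun m hm => ⟨(hJ₁votes m hm).2.2.2, (hJ₁votes m hm).2.2.1⟩)
      hM₁V hM₁card (fun m hm => ⟨(hM₁ m hm).2.1, (hM₁ m hm).2.2⟩)
      C₂.c C₂ hJ₂ rfl hconf.1 ?_
    rcases lt_or_eq_of_le hle with h | h
    · exact Or.inl h
    · exact Or.inr ⟨h, hconf.2⟩

end AuxAS

/-- Lemma "accountable safety". -/
theorem accountable_safety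
    {n : ℕ} {β : Type} {g : β} (V₁ V₂ : Set (FFGVote n β g))
    (C₁ C₂ : Checkpoint β g)
    (hC₁ : Finalized V₁ C₁) (hC₂ : Finalized V₂ C₂)
    (χ₁ χ₂ : Chain β g)
    (h₁ : χ₁.IsPrefix C₁.chain) (h₂ : χ₂.IsPrefix C₂.chain)
    (hconf : χ₁.Conflicts χ₂) :
    n ≤ 3 * Set.ncard {v : Fin n |
      ViolatesE1 (V₁ ∪ V₂) v ∨ ViolatesE2 (V₁ ∪ V₂) v} := by
  have hcc : C₁.chain.Conflicts C₂.chain := by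
    constructor
    · intro h
      rcases List.prefix_or_prefix_of_prefix (h₁.trans h) h₂ with h' | h'
      · exact hconf.1 h'
      · exact hconf.2 h'
    · intro h
      rcases List.prefix_or_prefix_of_prefix h₁ (h₂.trans h) with h' | h'
      · exact hconf.1 h'
      · exact hconf.2 h'
  rcases le_total C₁.c C₂.c with hle | hle
  · exact half_aux V₁ V₂ C₁ C₂ hC₁ hC₂ hcc hle
  · rw [Set.union_comm]
    exact half_aux V₂ V₁ C₂ C₁ hC₂ hC₁ ⟨hcc.2, hcc.1⟩ hle
end

section
/- (Lemma 'honest validators are never slashed' under Constraint 1.) Let v be a validator whose sent FFG-votes are given by a slot-indexed family: a partial function on ℕ assigning to each slot t at most one pair of checkpoints (S_t, T_t), such that T_t.c = t whenever the pair is defined at t, and S_t ≤ S_{t′} (in the checkpoint order) whenever t ≤ t′ are both slots where the family is defined. Then v violates neither E1 nor E2 with respect to the set of votes {(S_t, T_t, v) : t in the domain of the family}. -/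
/-- honest validators are never slashed, under Constraint 1. -/
theorem honest_never_slashed
    {n : ℕ} {β : Type} {g : β} (v : Fin n)
    (f : ℕ → Option (Checkpoint β g × Checkpoint β g))
    (htarget : ∀ t S T, f t = some (S, T) → T.c = t)
    (hmono : ∀ t t' S T S' T', t ≤ t' → f t = some (S, T) → f t' = some (S', T') →
      S.le S') :
    ¬ ViolatesE1 {m : FFGVote n β g | ∃ t S T, f t = some (S, T) ∧ m = ⟨S, T, v⟩} v ∧
    ¬ ViolatesE2 {m : FFGVote n β g | ∃ t S T, f t = some (S, T) ∧ m = ⟨S, T, v⟩} v := by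
  constructor
  · rintro ⟨m₁, ⟨t₁, S₁, T₁, hf₁, rfl⟩, m₂, ⟨t₂, S₂, T₂, hf₂, rfl⟩, -, -, hne, hc⟩
    simp only at hc
    have h1 := htarget _ _ _ hf₁
    have h2 := htarget _ _ _ hf₂
    subst h1; subst h2
    rw [hc, hf₂] at hf₁
    simp_all
  · rintro ⟨m₁, ⟨t₁, S₁, T₁, hf₁, rfl⟩, m₂, ⟨t₂, S₂, T₂, hf₂, rfl⟩, -, -, hlt, hc⟩
    simp only at hlt hc
    have h1 := htarget _ _ _ hf₁
    have h2 := htarget _ _ _ hf₂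
    have hle : S₁.le S₂ := hmono t₁ t₂ _ _ _ _ (by omega) hf₁ hf₂
    rcases hlt with h | ⟨h, h'⟩ <;> rcases hle with h2' | ⟨h2', h3⟩ <;> first | omega | linarith
end

section
/- (Theorem 'Accountable Safety': the finalized chain is n/3-accountable.) Call a validator v FFG-compliant w.r.t. a set V of FFG-votes if there exists a partial function on ℕ assigning to each slot t at most one pair of checkpoints (S_t, T_t), such that the votes from v in V are exactly the votes (S_t, T_t, v) over the slots t in its domain, T_t.c = t for each such slot, and S_t ≤ S_{t′} (checkpoint order) whenever t ≤ t′ are both in its domain. Let V be a set of FFG-votes among n validators and V₁, V₂ ⊆ V. If checkpoints 𝒞₁ finalized w.r.t. V₁ and 𝒞₂ finalized w.r.t. V₂ have conflicting chains, then there exists a set W of validators with 3·|W| ≥ n such that every v ∈ W violates E1 or E2 w.r.t. V₁ ∪ V₂; moreover, no validator that is FFG-compliant w.r.t. V violates E1 or E2 w.r.t. V, so in particular W contains no FFG-compliant validator. -/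
/-- A validator whose votes in `V` come from a slot-indexed family satisfying
Constraint 1 (at most one vote per slot, target slot equal to the voting slot,
monotone sources). -/
def FFGCompliant {n : ℕ} {β : Type} {g : β} (V : Set (FFGVote n β g)) (v : Fin n) : Prop :=
  ∃ f : ℕ → Option (Checkpoint β g × Checkpoint β g),
    ({m ∈ V | m.sender = v} =
      {m : FFGVote n β g | ∃ t S T, f t = some (S, T) ∧ m = ⟨S, T, v⟩}) ∧
    (∀ t S T, f t = some (S, T) → T.c = t) ∧
    (∀ t t' S T S' T', t ≤ t' → f t = some (S, T) → f t' = some (S', T') → S.le S')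


section AuxLemmas

namespace Chain
variable {β : Type} {g : β}

instance : IsTrans (Block β) (fun a b => a.p < b.p) := ⟨fun _ _ _ h1 h2 => h1.trans h2⟩

lemma blocks_eq_cons (χ : Chain β g) : χ.blocks = genesisBlock g :: χ.blocks.tail := by
  rcases h : χ.blocks with _ | ⟨b, l⟩
  · exact absurd h χ.ne
  · have := χ.head_genesis
    rw [h] at this
    simp at this
    simp [this]

lemma genesis_isPrefix (χ : Chain β g) : (genesisChain g).IsPrefix χ := by
  unfold IsPrefix genesisChain
  refine ⟨χ.blocks.tail, ?_⟩
  simpa using (χ.blocks_eq_cons).symm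

lemma height_lt_of_proper_prefix {χ₁ χ₂ : Chain β g} (h : χ₁.IsPrefix χ₂)
    (hne : χ₁.blocks ≠ χ₂.blocks) : χ₁.height < χ₂.height := by
  obtain ⟨t, ht⟩ := h
  rcases ht' : t with _ | ⟨b, l⟩
  · subst ht'; simp at ht; exact absurd ht hne
  subst ht'
  have hp : List.Pairwise (fun a b : Block β => a.p < b.p) χ₂.blocks :=
    List.isChain_iff_pairwise.mp χ₂.strict
  rw [← ht, List.pairwise_append] at hp
  have h1 : χ₁.blocks.getLast χ₁.ne ∈ χ₁.blocks := List.getLast_mem _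
  have h2 : χ₂.blocks.getLast χ₂.ne = (b :: l).getLast (by simp) := by
    have := List.getLast_append_right (l := χ₁.blocks) (l' := b :: l) (by simp)
    simp_rw [ht] at this
    exact this
  have h3 : (b :: l).getLast (by simp) ∈ b :: l := List.getLast_mem _
  have := hp.2.2 _ h1 _ h3
  rw [Chain.height, Chain.height, h2]
  exact this

lemma height_le_of_prefix {χ₁ χ₂ : Chain β g} (h : χ₁.IsPrefix χ₂) :
    χ₁.height ≤ χ₂.height := by
  by_cases he : χ₁.blocks = χ₂.blocks
  · unfold height; simp_rw [he]; exact le_rfl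
  · exact (height_lt_of_proper_prefix h he).le

lemma genesisChain_height : (genesisChain g).height = -1 := rfl

lemma blocks_eq_of_height_le_neg_one (χ : Chain β g) (h : χ.height ≤ -1) :
    χ.blocks = [genesisBlock g] := by
  have hc := χ.blocks_eq_cons
  rcases ht : χ.blocks.tail with _ | ⟨b, l⟩
  · rw [ht] at hc; exact hc
  · exfalso
    have hpre : (genesisChain g).IsPrefix χ := genesis_isPrefix χ
    have hne : (genesisChain g).blocks ≠ χ.blocks := by
      rw [hc, ht]; simp [genesisChain]
    have := height_lt_of_proper_prefix hpre hne
    rw [genesisChain_height] at this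
    omega

end Chain

namespace Checkpoint
variable {β : Type} {g : β}

lemma lt_of_not_le {C C' : Checkpoint β g} (h : ¬ C.le C') : C'.lt C := by
  unfold Checkpoint.le at h
  push_neg at h
  unfold Checkpoint.lt
  rcases lt_trichotomy C'.c C.c with h1 | h1 | h1
  · exact Or.inl h1
  · exact Or.inr ⟨h1, h.2 h1.symm⟩
  · omega

lemma le_of_lt' {C C' : Checkpoint β g} (h : C.lt C') : C.le C' := by
  rcases h with h | ⟨h1, h2⟩
  · exact Or.inl h
  · exact Or.inr ⟨h1, h2.le⟩

lemma not_lt_self {C : Checkpoint β g} : ¬ C.lt C := by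
  rintro (h | ⟨_, h⟩)
  · omega
  · exact lt_irrefl _ h

lemma lt_le_asymm {C C' : Checkpoint β g} (h : C.lt C') (h' : C'.le C) : False := by
  rcases h with h | ⟨h1, h2⟩ <;> rcases h' with h' | ⟨h1', h2'⟩
  · omega
  · omega
  · omega
  · exact absurd (lt_of_lt_of_le h2 h2') (lt_irrefl _)

end Checkpoint

variable {n : ℕ} {β : Type} {g : β}

lemma inter_ncard_ge {A B : Set (Fin n)} (hA : 2 * n ≤ 3 * A.ncard)
    (hB : 2 * n ≤ 3 * B.ncard) : n ≤ 3 * (A ∩ B).ncard := by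
  have h1 := Set.ncard_union_add_ncard_inter A B
  have h2 : (A ∪ B).ncard ≤ n := by
    have := Set.ncard_le_ncard (Set.subset_univ (A ∪ B)) Set.finite_univ
    rwa [Set.ncard_univ, Nat.card_eq_fintype_card, Fintype.card_fin] at this
  omega

lemma violatesE1_mono {V V' : Set (FFGVote n β g)} (h : V ⊆ V') {v : Fin n}
    (hv : ViolatesE1 V v) : ViolatesE1 V' v := by
  obtain ⟨m₁, h₁, m₂, h₂, rest⟩ := hv
  exact ⟨m₁, h h₁, m₂, h h₂, rest⟩

lemma violatesE2_mono {V V' : Set (FFGVote n β g)} (h : V ⊆ V') {v : Fin n}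
    (hv : ViolatesE2 V v) : ViolatesE2 V' v := by
  obtain ⟨m₁, h₁, m₂, h₂, rest⟩ := hv
  exact ⟨m₁, h h₁, m₂, h h₂, rest⟩

lemma compliant_not_violates {V : Set (FFGVote n β g)} {v : Fin n}
    (h : FFGCompliant V v) : ¬ (ViolatesE1 V v ∨ ViolatesE2 V v) := by
  obtain ⟨f, hset, htc, hmono⟩ := h
  have hmem : ∀ m ∈ V, m.sender = v →
      f m.target.c = some (m.source, m.target) ∧ m = ⟨m.source, m.target, v⟩ := by
    intro m hm hs
    have hmm : m ∈ {m ∈ V | m.sender = v} := ⟨hm, hs⟩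
    rw [hset] at hmm
    obtain ⟨t, S, T, hft, hm'⟩ := hmm
    have hts : m.source = S := by rw [hm']
    have htt : m.target = T := by rw [hm']
    have htc' : T.c = t := htc t S T hft
    rw [hts, htt, htc', hft]
    exact ⟨rfl, hm'⟩
  rintro (⟨m₁, h₁, m₂, h₂, hs₁, hs₂, hne, htceq⟩ | ⟨m₁, h₁, m₂, h₂, hs₁, hs₂, hlt, hcc⟩)
  · obtain ⟨hf₁, he₁⟩ := hmem m₁ h₁ hs₁
    obtain ⟨hf₂, he₂⟩ := hmem m₂ h₂ hs₂
    rw [htceq, hf₂] at hf₁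
    apply hne
    rw [he₁, he₂]
    simp only [Option.some.injEq, Prod.mk.injEq] at hf₁
    rw [hf₁.1, hf₁.2]
  · obtain ⟨hf₁, _⟩ := hmem m₁ h₁ hs₁
    obtain ⟨hf₂, _⟩ := hmem m₂ h₂ hs₂
    have hle := hmono m₁.target.c m₂.target.c _ _ _ _ hcc.le hf₁ hf₂
    exact Checkpoint.lt_le_asymm hlt hle

lemma key_lemma (V₁ V₂ : Set (FFGVote n β g))
    (C₁ : Checkpoint β g) (hC₁j : Justified V₁ C₁)
    (M₁ : Set (FFGVote n β g)) (hM₁V : M₁ ⊆ V₁)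
    (hM₁card : 2 * n ≤ 3 * (senders M₁).ncard)
    (hM₁ : ∀ m ∈ M₁, m.Valid ∧ m.source = C₁ ∧ m.target.c = C₁.c + 1)
    (D : Checkpoint β g) (hD : Justified V₂ D) :
    C₁.le D → ¬ C₁.chain.IsPrefix D.chain →
    ∃ W : Set (Fin n), n ≤ 3 * W.ncard ∧
      ∀ v ∈ W, ViolatesE1 (V₁ ∪ V₂) v ∨ ViolatesE2 (V₁ ∪ V₂) v := by
  induction hD with
  | genesis =>
      intro hle hnp
      exfalso
      rcases hle with h | ⟨h1, h2⟩
      · simp [genesisCheckpoint] at h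
      · have hb : C₁.chain.blocks = [genesisBlock g] :=
          C₁.chain.blocks_eq_of_height_le_neg_one
            (by simpa [genesisCheckpoint, Chain.genesisChain_height] using h2)
        apply hnp
        unfold Chain.IsPrefix
        rw [hb]
        simp [genesisCheckpoint, genesisChain]
  | step D M hMV hcard hjust hvotes ih =>
      intro hle hnp
      by_cases hex : ∃ m ∈ M, C₁.le m.source
      · obtain ⟨m, hm, hles⟩ := hex
        refine ih m hm hles ?_
        intro hp
        exact hnp (List.IsPrefix.trans hp (hvotes m hm).2.1)
      · push_neg at hex
        have hsrc : ∀ m ∈ M, m.source.lt C₁ := fun m hm =>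
          Checkpoint.lt_of_not_le (hex m hm)
        rcases hle with hlt | ⟨heq, hh⟩
        · -- C₁.c < D.c : use the finalizing set M₁
          refine ⟨senders M₁ ∩ senders M, inter_ncard_ge hM₁card hcard, ?_⟩
          rintro v ⟨⟨m₁, hm₁, hsv₁⟩, ⟨m₂, hm₂, hsv₂⟩⟩
          obtain ⟨hv₁, hsrc₁, htc₁⟩ := hM₁ m₁ hm₁
          obtain ⟨hv₂, hsp₂, htp₂, htc₂⟩ := hvotes m₂ hm₂
          have hne : m₁ ≠ m₂ := by
            intro he
            have := hsrc m₂ hm₂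
            rw [← he, hsrc₁] at this
            exact Checkpoint.not_lt_self this
          by_cases hcase : D.c = C₁.c + 1
          · left
            exact ⟨m₁, Or.inl (hM₁V hm₁), m₂, Or.inr (hMV hm₂), hsv₁, hsv₂, hne,
              by rw [htc₁, htc₂, hcase]⟩
          · right
            refine ⟨m₁, Or.inl (hM₁V hm₁), m₂, Or.inr (hMV hm₂), hsv₁, hsv₂, ?_, ?_⟩
            · rw [hsrc₁]; exact hsrc m₂ hm₂
            · rw [htc₁, htc₂]; omega
        · -- C₁.c = D.c : use the justifying set of C₁
          rcases hC₁j with _ | ⟨_, M₁', hM₁'V, hcard', hjust', hvotes'⟩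
          · exact absurd (Chain.genesis_isPrefix D.chain) hnp
          refine ⟨senders M₁' ∩ senders M, inter_ncard_ge hcard' hcard, ?_⟩
          rintro v ⟨⟨m₁, hm₁, hsv₁⟩, ⟨m₂, hm₂, hsv₂⟩⟩
          obtain ⟨hv₁, hsp₁, htp₁, htc₁⟩ := hvotes' m₁ hm₁
          obtain ⟨hv₂, hsp₂, htp₂, htc₂⟩ := hvotes m₂ hm₂
          have hne : m₁ ≠ m₂ := by
            intro he
            rw [he] at htp₁
            rcases List.prefix_or_prefix_of_prefix htp₁ htp₂ with hp | hp
            · exact hnp hp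
            · by_cases hb : D.chain.blocks = C₁.chain.blocks
              · exact hnp (by unfold Chain.IsPrefix; rw [hb])
              · have := Chain.height_lt_of_proper_prefix hp hb
                omega
          left
          exact ⟨m₁, Or.inl (hM₁'V hm₁), m₂, Or.inr (hMV hm₂), hsv₁, hsv₂, hne,
            by rw [htc₁, htc₂, heq]⟩

end AuxLemmas

/-- Accountable Safety: the finalized chain is n/3-accountable. -/
theorem accountable_safety_n_over_three
    {n : ℕ} {β : Type} {g : β} (V V₁ V₂ : Set (FFGVote n β g))
    (hV₁ : V₁ ⊆ V) (hV₂ : V₂ ⊆ V)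
    (C₁ C₂ : Checkpoint β g)
    (hC₁ : Finalized V₁ C₁) (hC₂ : Finalized V₂ C₂)
    (hconf : C₁.chain.Conflicts C₂.chain) :
    (∃ W : Set (Fin n), n ≤ 3 * W.ncard ∧
      (∀ v ∈ W, ViolatesE1 (V₁ ∪ V₂) v ∨ ViolatesE2 (V₁ ∪ V₂) v) ∧
      (∀ v ∈ W, ¬ FFGCompliant V v)) ∧
    (∀ v : Fin n, FFGCompliant V v → ¬ (ViolatesE1 V v ∨ ViolatesE2 V v)) := by
  have part2 : ∀ v : Fin n, FFGCompliant V v → ¬ (ViolatesE1 V v ∨ ViolatesE2 V v) :=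
    fun v h => compliant_not_violates h
  refine ⟨?_, part2⟩
  have hsub : V₁ ∪ V₂ ⊆ V := Set.union_subset hV₁ hV₂
  have key : ∃ W : Set (Fin n), n ≤ 3 * W.ncard ∧
      ∀ v ∈ W, ViolatesE1 (V₁ ∪ V₂) v ∨ ViolatesE2 (V₁ ∪ V₂) v := by
    rcases hC₁ with rfl | ⟨hj₁, M₁, hM₁V, hcard₁, hM₁⟩
    · exact absurd (Chain.genesis_isPrefix C₂.chain) hconf.1
    rcases hC₂ with rfl | ⟨hj₂, M₂, hM₂V, hcard₂, hM₂⟩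
    · exact absurd (Chain.genesis_isPrefix C₁.chain) hconf.2
    by_cases hle : C₁.le C₂
    · exact key_lemma V₁ V₂ C₁ hj₁ M₁ hM₁V hcard₁ hM₁ C₂ hj₂ hle hconf.1
    · have hle' : C₂.le C₁ := Checkpoint.le_of_lt' (Checkpoint.lt_of_not_le hle)
      have := key_lemma V₂ V₁ C₂ hj₂ M₂ hM₂V hcard₂ hM₂ C₁ hj₁ hle' hconf.2
      rwa [Set.union_comm V₂ V₁] at this
  obtain ⟨W, hWcard, hWviol⟩ := key
  refine ⟨W, hWcard, hWviol, ?_⟩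
  intro v hv hcomp
  refine part2 v hcomp ?_
  rcases hWviol v hv with h | h
  · exact Or.inl (violatesE1_mono hsub h)
  · exact Or.inr (violatesE2_mono hsub h)
end

section
/- (Checkpoints justified at a slot extend only the honest target chain; implicit in the proof of the Liveness theorem.) Let n ≥ 1, V a set of FFG-votes among n validators, c : ℕ, χ_p a chain, and H a set of validators with 3·|H| ≥ 2n such that every vote (S, T, v) ∈ V with v ∈ H and T.c = c satisfies T.chain ⪯ χ_p. Then every checkpoint 𝒞 with 𝒞.c = c that is justified w.r.t. V satisfies 𝒞.chain ⪯ χ_p. -/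
/-- checkpoints justified at a slot extend only the honest target
chain. -/
theorem justified_extends_honest_target
    {n : ℕ} {β : Type} {g : β} (hn : 1 ≤ n) (V : Set (FFGVote n β g)) (c : ℕ)
    (χp : Chain β g) (H : Set (Fin n)) (hH : 2 * n ≤ 3 * H.ncard)
    (hhonest : ∀ m ∈ V, m.sender ∈ H → m.target.c = c → m.target.chain.IsPrefix χp) :
    ∀ C : Checkpoint β g, C.c = c → Justified V C → C.chain.IsPrefix χp := by
  intro C hc hj
  induction hj with
  | genesis =>
    -- genesis chain is a prefix of any chain
    show (genesisChain g).blocks <+: χp.blocks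
    obtain ⟨b, l, hbl⟩ : ∃ b l, χp.blocks = b :: l := by
      cases h : χp.blocks with
      | nil => exact absurd h χp.ne
      | cons b l => exact ⟨b, l, rfl⟩
    have hb : b = genesisBlock g := by
      have := χp.head_genesis
      rw [hbl] at this
      simpa [Set.ncard_univ] using this
    rw [hbl, hb]
    exact ⟨l, rfl⟩
  | step C M hMV hcard hjust hvotes ih =>
    -- find a vote in M whose sender is honest
    have hfin : (senders M ∩ H).Nonempty := by
      by_contra hemp
      rw [Set.not_nonempty_iff_eq_empty] at hemp
      have hdisj : Disjoint (senders M) H := Set.disjoint_iff_inter_eq_empty.mpr hemp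
      have hcup : (senders M ∪ H).ncard = (senders M).ncard + H.ncard :=
        Set.ncard_union_eq hdisj (Set.toFinite _) (Set.toFinite _)
      have hle : (senders M ∪ H).ncard ≤ n := by
        have := Set.ncard_le_ncard (Set.subset_univ (senders M ∪ H)) (Set.toFinite _)
        simpa [Set.ncard_univ] using this
      omega
    obtain ⟨v, hvS, hvH⟩ := hfin
    obtain ⟨m, hmM, hms⟩ := hvS
    obtain ⟨_, _, hCpre, htc⟩ := hvotes m hmM
    have htpre : m.target.chain.IsPrefix χp :=
      hhonest m (hMV hmM) (hms ▸ hvH) (by rw [htc, hc])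
    exact List.IsPrefix.trans hCpre htpre
end

section
/- (Conflicting quorum certificates cannot form in the same slot, used in the fast-confirmation analysis.) Let W ⊆ Fin n × Chain be a slot-vote record, let E = {v : there exist chains χ ≠ χ′ with (v, χ) ∈ W and (v, χ′) ∈ W} be the set of equivocators, and suppose 3·|E| < n. Let χ₁ and χ₂ be chains and for i = 1, 2 let A_i = {v : there exists a chain χ with (v, χ) ∈ W and χ_i ⪯ χ} be the set of validators voting for an extension of χ_i. If 3·|A₁| ≥ 2n and 3·|A₂| ≥ 2n, then χ₁ and χ₂ do not conflict. -/
/-- A slot-vote record: which chains each validator voted for in a given slot. -/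
abbrev SlotVoteRecord (n : ℕ) (β : Type) (g : β) := Set (Fin n × Chain β g)

/-- conflicting quorum certificates cannot form in the same slot. -/
theorem no_conflicting_quorum_certificates
    {n : ℕ} {β : Type} {g : β} (W : SlotVoteRecord n β g)
    (hE : 3 * Set.ncard {v : Fin n |
      ∃ χ χ' : Chain β g, χ ≠ χ' ∧ (v, χ) ∈ W ∧ (v, χ') ∈ W} < n)
    (χ₁ χ₂ : Chain β g)
    (hA₁ : 2 * n ≤ 3 * Set.ncard {v : Fin n |
      ∃ χ : Chain β g, (v, χ) ∈ W ∧ χ₁.IsPrefix χ})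
    (hA₂ : 2 * n ≤ 3 * Set.ncard {v : Fin n |
      ∃ χ : Chain β g, (v, χ) ∈ W ∧ χ₂.IsPrefix χ}) :
    ¬ χ₁.Conflicts χ₂ := by
  intro hconf
  set E := {v : Fin n | ∃ χ χ' : Chain β g, χ ≠ χ' ∧ (v, χ) ∈ W ∧ (v, χ') ∈ W} with hEdef
  set A₁ := {v : Fin n | ∃ χ : Chain β g, (v, χ) ∈ W ∧ χ₁.IsPrefix χ} with hA1def
  set A₂ := {v : Fin n | ∃ χ : Chain β g, (v, χ) ∈ W ∧ χ₂.IsPrefix χ} with hA2def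
  have hfin1 : A₁.Finite := Set.toFinite _
  have hfin2 : A₂.Finite := Set.toFinite _
  have hunion : (A₁ ∪ A₂).ncard ≤ n := by
    calc (A₁ ∪ A₂).ncard ≤ (Set.univ : Set (Fin n)).ncard :=
          Set.ncard_le_ncard (Set.subset_univ _) (Set.toFinite _)
      _ = n := by simp [Set.ncard_univ]
  have hkey : (A₁ ∪ A₂).ncard + (A₁ ∩ A₂).ncard = A₁.ncard + A₂.ncard :=
    Set.ncard_union_add_ncard_inter A₁ A₂ hfin1 hfin2
  have hlt : E.ncard < (A₁ ∩ A₂).ncard := by omega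
  obtain ⟨v, hv, hvE⟩ := Set.exists_mem_notMem_of_ncard_lt_ncard hlt (Set.toFinite _)
  obtain ⟨⟨χ, hχW, hχ1⟩, ⟨χ', hχ'W, hχ'2⟩⟩ := hv
  have heq : χ = χ' := by
    by_contra hne
    exact hvE ⟨χ, χ', hne, hχW, hχ'W⟩
  subst heq
  rcases List.prefix_or_prefix_of_prefix hχ1 hχ'2 with h | h
  · exact hconf.1 h
  · exact hconf.2 h
end

section
/- (Appendix lemma: honest validators are never slashed in the protocol with acknowledgments.) Let v be a validator whose sent FFG-votes are given by a slot-indexed family: a partial function on ℕ assigning to each slot t at most one pair of checkpoints (S_t, T_t), such that T_t.c = t whenever defined and S_t ≤ S_{t′} (checkpoint order) whenever t ≤ t′ are both in the domain; and whose sent acks are given by a partial function on ℕ assigning to each slot t at most one checkpoint C_t with C_t.c = t, such that for every slot t where an ack C_t is defined and every slot t′ > t where a vote (S_{t′}, T_{t′}) is defined, C_t ≤ S_{t′}. Then v violates neither E1 nor E2 w.r.t. the set of its votes {(S_t, T_t, v)}, nor E3 w.r.t. this vote set together with the ack set {(C_t, v)}. -/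
/-- honest validators are never slashed in the protocol with
acknowledgments. -/
theorem honest_never_slashed_with_acks
    {n : ℕ} {β : Type} {g : β} (v : Fin n)
    (f : ℕ → Option (Checkpoint β g × Checkpoint β g))
    (a : ℕ → Option (Checkpoint β g))
    (htarget : ∀ t S T, f t = some (S, T) → T.c = t)
    (hmono : ∀ t t' S T S' T', t ≤ t' → f t = some (S, T) → f t' = some (S', T') →
      S.le S')
    (hackslot : ∀ t C, a t = some C → C.c = t)
    (hacksrc : ∀ t t' C S T, a t = some C → t < t' → f t' = some (S, T) → C.le S) :
    ¬ ViolatesE1 {m : FFGVote n β g | ∃ t S T, f t = some (S, T) ∧ m = ⟨S, T, v⟩} v ∧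
    ¬ ViolatesE2 {m : FFGVote n β g | ∃ t S T, f t = some (S, T) ∧ m = ⟨S, T, v⟩} v ∧
    ¬ ViolatesE3 {m : FFGVote n β g | ∃ t S T, f t = some (S, T) ∧ m = ⟨S, T, v⟩}
        {ack : Ack n β g | ∃ t C, a t = some C ∧ ack = ⟨C, v⟩} v := by
  have key : ∀ (X Y : Checkpoint β g), X.le Y → ¬ Y.lt X := by
    rintro X Y (h | ⟨h1, h2⟩) (h' | ⟨h1', h2'⟩) <;> omega
  refine ⟨?_, ?_, ?_⟩
  · rintro ⟨m₁, ⟨t₁, S₁, T₁, hf₁, rfl⟩, m₂, ⟨t₂, S₂, T₂, hf₂, rfl⟩, -, -, hne, hc⟩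
    simp only at hc
    have e1 := htarget _ _ _ hf₁
    have e2 := htarget _ _ _ hf₂
    have : t₁ = t₂ := by omega
    subst this
    rw [hf₁] at hf₂
    simp_all
  · rintro ⟨m₁, ⟨t₁, S₁, T₁, hf₁, rfl⟩, m₂, ⟨t₂, S₂, T₂, hf₂, rfl⟩, -, -, hlt, hc⟩
    simp only at hlt hc
    have e1 := htarget _ _ _ hf₁
    have e2 := htarget _ _ _ hf₂
    exact key _ _ (hmono t₁ t₂ S₁ T₁ S₂ T₂ (by omega) hf₁ hf₂) hlt
  · rintro ⟨m, ⟨t', S, T, hf, rfl⟩, ack, ⟨t, C, ha, rfl⟩, -, -, hlt, hc⟩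
    simp only at hlt hc
    have e1 := htarget _ _ _ hf
    have e2 := hackslot _ _ ha
    exact key _ _ (hacksrc t t' C S T ha (by omega) hf) hlt
end
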